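/- Let K be a field, let K_0 ⊆ ... ⊆ K_n ⊆ K be finite subfields with |K_i| = d_i, let X = [K_0 × ... × K_n] ⊆ P^n(K), and let P = (a_0 : ... : a_n) ∈ X with a_0 ≠ 0, normalized so a_0 = 1. Then the polynomial f = t_0 · Π_{i=1}^{n} Π_{λ ∈ K_i \ {a_i}} (t_i - λ t_0) is homogeneous of degree 1 + Σ_{i=1}^{n}(d_i - 1), satisfies f(P) ≠ 0, and f(Q) = 0 for every Q ∈ X with Q ≠ P. -/

import Mathlib

open Finset MvPolynomial
open scoped LinearAlgebra.Projectivization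

theorem stmt_11 (K : Type*) [Field K] [DecidableEq K] (n : ℕ)
    (A : Fin (n + 1) → Subfield K)
    (hnested : ∀ i j : Fin (n + 1), i ≤ j → A i ≤ A j)
    (hfin : ∀ i, (A i : Set K).Finite)
    (d : Fin (n + 1) → ℕ) (hd : ∀ i, Nat.card (A i) = d i)
    (a : Fin (n + 1) → K) (ha0 : a 0 = 1) (haA : ∀ i, a i ∈ A i)
    (hane : a ≠ 0) :
    (X 0 * ∏ i ∈ Ioi (0 : Fin (n + 1)), ∏ l ∈ (hfin i).toFinset.erase (a i),
        (X i - C l * X 0) : MvPolynomial (Fin (n + 1)) K).IsHomogeneous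
      (1 + ∑ i ∈ Ioi (0 : Fin (n + 1)), (d i - 1)) ∧
    eval a (X 0 * ∏ i ∈ Ioi (0 : Fin (n + 1)), ∏ l ∈ (hfin i).toFinset.erase (a i),
        (X i - C l * X 0) : MvPolynomial (Fin (n + 1)) K) ≠ 0 ∧
    ∀ (b : Fin (n + 1) → K) (hb : b ≠ 0), (∀ i, b i ∈ A i) →
      Projectivization.mk K b hb ≠ Projectivization.mk K a hane →
      eval b (X 0 * ∏ i ∈ Ioi (0 : Fin (n + 1)), ∏ l ∈ (hfin i).toFinset.erase (a i),
        (X i - C l * X 0) : MvPolynomial (Fin (n + 1)) K) = 0 := by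
  refine ⟨?_, ?_, ?_⟩
  · refine (isHomogeneous_X _ _).mul ?_
    refine IsHomogeneous.prod _ _ _ (fun i hi => ?_)
    have hcard : ((hfin i).toFinset.erase (a i)).card = d i - 1 := by
      rw [Finset.card_erase_of_mem (by simp [haA i]), ← hd i]
      congr 1
      exact ((Nat.card_coe_set_eq _).trans (Set.ncard_eq_toFinset_card _ (hfin i))).symm
    rw [← hcard]
    have hp := IsHomogeneous.prod ((hfin i).toFinset.erase (a i))
      (fun l => (X i - C l * X 0 : MvPolynomial (Fin (n + 1)) K)) (fun _ => 1)
      (fun l _ => (isHomogeneous_X _ _).sub ((isHomogeneous_C _ _).mul (isHomogeneous_X _ _)))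
    simpa using hp
  · simp only [map_mul, eval_X, map_prod, map_sub, eval_C, ha0, mul_one, one_mul]
    refine Finset.prod_ne_zero_iff.2 fun i hi => ?_
    refine Finset.prod_ne_zero_iff.2 fun l hl => ?_
    have : l ≠ a i := (Finset.mem_erase.1 hl).1
    exact sub_ne_zero.2 this.symm
  · intro b hb hbA hne
    simp only [map_mul, eval_X, map_prod, map_sub, eval_C]
    by_cases hb0 : b 0 = 0
    · simp [hb0]
    by_contra h
    have hfac : ∀ i ∈ Ioi (0 : Fin (n + 1)), ∀ l ∈ (hfin i).toFinset.erase (a i),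
        b i - l * b 0 ≠ 0 := by
      intro i hi l hl
      have h2 : ∏ i ∈ Ioi (0 : Fin (n + 1)), ∏ l ∈ (hfin i).toFinset.erase (a i),
          (b i - l * b 0) ≠ 0 := fun hz => h (by rw [hz, mul_zero])
      exact Finset.prod_ne_zero_iff.1 (Finset.prod_ne_zero_iff.1 h2 i hi) l hl
    have key : ∀ i, b i = b 0 * a i := by
      intro i
      rcases eq_or_ne i 0 with rfl | hi0
      · rw [ha0, mul_one]
      · have hi : i ∈ Ioi (0 : Fin (n + 1)) := by
          simp [Finset.mem_Ioi, Fin.pos_iff_ne_zero, hi0]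
        by_contra hne'
        have hl : b i / b 0 ∈ A i := by
          have hb0A : b 0 ∈ A i := hnested 0 i (Fin.zero_le i) (hbA 0)
          exact div_mem (hbA i) hb0A
        have hlne : b i / b 0 ≠ a i := fun h' => hne' (by field_simp at h'; linear_combination h')
        have : b i / b 0 ∈ (hfin i).toFinset.erase (a i) :=
          Finset.mem_erase.2 ⟨hlne, by simpa using hl⟩
        exact hfac i hi _ this (by field_simp; ring)
    exact hne ((Projectivization.mk_eq_mk_iff' K b a hb hane).2
      ⟨b 0, funext fun i => by simp [Pi.smul_apply, smul_eq_mul, key i]⟩)
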